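/- The expected number of k×k equilibria in an m×n random weak-selection fitness matrix is at least 2·(mn/(4k²))^k. -/

import Mathlib

open Finset Matrix MeasureTheory

/-- The uniform probability measure on `[-1, 1]`. -/
noncomputable def unifMeasure : Measure ℝ :=
  (2 : ENNReal)⁻¹ • volume.restrict (Set.Icc (-1 : ℝ) 1)

instance : IsProbabilityMeasure unifMeasure := by
  constructor
  rw [unifMeasure, Measure.smul_apply, Measure.restrict_apply MeasurableSet.univ,
    Set.univ_inter, Real.volume_Icc]
  norm_num
  exact ENNReal.inv_mul_cancel (by norm_num) (by norm_num)

instance matrixMeasurableSpace (m n : ℕ) : MeasurableSpace (Matrix (Fin m) (Fin n) ℝ) :=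
  MeasurableSpace.pi

/-- The law of an `m × n` random matrix with i.i.d. entries uniform on `[-1,1]`. -/
noncomputable def rectMatrixMeasure (m n : ℕ) : Measure (Matrix (Fin m) (Fin n) ℝ) :=
  Measure.pi fun _ : Fin m => Measure.pi fun _ : Fin n => unifMeasure

/-- A `k × k` submatrix, given by strictly monotone row/column selections, is an
equilibrium if it is invertible and its inverse has positive row and column sums. -/
def IsEquilibriumSubmatrix {m n k : ℕ} (Δ : Matrix (Fin m) (Fin n) ℝ)
    (r : Fin k → Fin m) (c : Fin k → Fin n) : Prop :=
  StrictMono r ∧ StrictMono c ∧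
    IsUnit (Δ.submatrix r c).det ∧
    (∀ i, 0 < ∑ j, (Δ.submatrix r c)⁻¹ i j) ∧
    (∀ j, 0 < ∑ i, (Δ.submatrix r c)⁻¹ i j)

instance : NullSingletonClass unifMeasure := by
  constructor
  intro x
  rw [unifMeasure, Measure.smul_apply, Measure.restrict_apply (measurableSet_singleton x)]
  have : volume ({x} ∩ Set.Icc (-1:ℝ) 1) = 0 :=
    measure_mono_null Set.inter_subset_left (measure_singleton x)
  simp [this]

lemma measurable_mvpoly_eval {n : Type*} [Fintype n] (p : MvPolynomial n ℝ) :
    Measurable fun x : n → ℝ => MvPolynomial.eval x p := by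
  classical
  simp_rw [MvPolynomial.eval_eq]
  refine Finset.measurable_sum _ fun d _ => Measurable.const_mul ?_ _
  exact Finset.measurable_prod _ fun i _ => ((measurable_pi_apply i).pow_const _)

/-- Zero set of a nonzero multivariate polynomial is null for the product uniform measure. -/
lemma mvpoly_null : ∀ (n : ℕ) (p : MvPolynomial (Fin n) ℝ), p ≠ 0 →
    (Measure.pi fun _ : Fin n => unifMeasure) {x | MvPolynomial.eval x p = 0} = 0 := by
  intro n
  induction n with
  | zero =>
    intro p hp
    have h0 : ∀ x : Fin 0 → ℝ, MvPolynomial.eval x p ≠ 0 := by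
      intro x h
      apply hp
      have := MvPolynomial.eq_C_of_isEmpty p
      rw [this] at h ⊢
      rw [MvPolynomial.eval_C] at h
      rw [h, map_zero]
    have : {x : Fin 0 → ℝ | MvPolynomial.eval x p = 0} = ∅ := by
      ext x; simp [h0 x]
    rw [this]; simp
  | succ n ih =>
    intro p hp
    set q := MvPolynomial.finSuccEquiv ℝ n p with hq
    have hq0 : q ≠ 0 := by
      simp only [hq, ne_eq, EmbeddingLike.map_eq_zero_iff]
      exact hp
    -- transport along piFinSuccAbove at 0
    have mp := measurePreserving_piFinSuccAbove (fun _ : Fin (n+1) => unifMeasure) 0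
    set Z : Set (Fin (n+1) → ℝ) := {x | MvPolynomial.eval x p = 0} with hZ
    have hZm : MeasurableSet Z := (measurable_mvpoly_eval p) (measurableSet_singleton 0)
    set e := MeasurableEquiv.piFinSuccAbove (fun _ : Fin (n+1) => ℝ) 0 with he
    have hSm : MeasurableSet (⇑e.symm ⁻¹' Z) := e.symm.measurable hZm
    have hZ' : (Measure.pi fun _ : Fin (n+1) => unifMeasure) Z
        = (unifMeasure.prod (Measure.pi fun _ : Fin n => unifMeasure)) (e.symm ⁻¹' Z) := by
      rw [← mp.measure_preimage hSm.nullMeasurableSet]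
      congr 1
      ext x
      simp
    rw [hZ']
    have hswap : (unifMeasure.prod (Measure.pi fun _ : Fin n => unifMeasure)) (e.symm ⁻¹' Z)
        = ((Measure.pi fun _ : Fin n => unifMeasure).prod unifMeasure)
            (Prod.swap ⁻¹' (e.symm ⁻¹' Z)) := by
      rw [← Measure.prod_swap, Measure.map_apply measurable_swap hSm]
    rw [hswap, Measure.measure_prod_null (measurable_swap hSm)]
    -- pick a nonzero coefficient of q
    obtain ⟨i0, hi0⟩ : ∃ i, q.coeff i ≠ 0 := by
      by_contra h
      push_neg at h
      exact hq0 (Polynomial.ext fun i => by simp [h i])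
    have hbad : ∀ᵐ y ∂(Measure.pi fun _ : Fin n => unifMeasure),
        MvPolynomial.eval y (q.coeff i0) ≠ 0 := by
      rw [ae_iff]
      convert ih (q.coeff i0) hi0 using 2
      ext y
      simp
    filter_upwards [hbad] with y hy
    have hpy : (q.map (MvPolynomial.eval y)) ≠ 0 := by
      intro h
      apply hy
      rw [← Polynomial.coeff_map]
      rw [h]
      simp
    have hsec : (Prod.mk y ⁻¹' (Prod.swap ⁻¹' (⇑e.symm ⁻¹' Z)))
        ⊆ {a : ℝ | Polynomial.eval a (q.map (MvPolynomial.eval y)) = 0} := by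
      intro a ha
      have hmem : MvPolynomial.eval (e.symm (a, y)) p = 0 := ha
      have hcons : (e.symm (a, y) : Fin (n+1) → ℝ) = Fin.cons a y := by
        simp [he, MeasurableEquiv.piFinSuccAbove, Fin.insertNth_zero]
        rfl
      rw [hcons, MvPolynomial.eval_eq_eval_mv_eval'] at hmem
      exact hmem
    have : ((Prod.mk y ⁻¹' (Prod.swap ⁻¹' (⇑e.symm ⁻¹' Z)))).Finite :=
      Set.Finite.subset (Polynomial.finite_setOf_isRoot hpy) hsec
    exact this.measure_zero _

section PiProb
variable {ι ι' : Type*} [Fintype ι] [Fintype ι'] {α : Type*} [MeasurableSpace α]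
  (μ : Measure α) [IsProbabilityMeasure μ]

lemma measurable_comp_precomp (f : ι' → ι) : Measurable fun x : ι → α => x ∘ f :=
  measurable_pi_iff.mpr fun i => measurable_pi_apply (f i)

/-- Marginal of an iid product along an injection. -/
lemma map_precomp_pi (f : ι' → ι) (hf : Function.Injective f) :
    Measure.map (fun x : ι → α => x ∘ f) (Measure.pi fun _ : ι => μ)
      = Measure.pi fun _ : ι' => μ := by
  classical
  refine (Measure.pi_eq fun s hs => ?_).symm
  rw [Measure.map_apply (measurable_comp_precomp f) (MeasurableSet.univ_pi hs)]
  have hpre : (fun x : ι → α => x ∘ f) ⁻¹' (Set.pi Set.univ s)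
      = Set.pi Set.univ (fun j => if h : ∃ i', f i' = j then s h.choose else Set.univ) := by
    ext x
    simp only [Set.mem_preimage, Set.mem_pi, Set.mem_univ, forall_true_left]
    constructor
    · intro h j
      split
      · next hex =>
        simpa only [Function.comp_apply, hex.choose_spec] using h hex.choose
      · trivial
    · intro h i'
      have := h (f i')
      have hex : ∃ i'', f i'' = f i' := ⟨i', rfl⟩
      rw [dif_pos hex] at this
      rwa [hf hex.choose_spec] at this
  rw [hpre, Measure.pi_pi]
  rw [← Finset.prod_subset (Finset.subset_univ (Finset.image f Finset.univ)) ?_]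
  · rw [Finset.prod_image (fun a _ b _ h => hf h)]
    refine Finset.prod_congr rfl fun i' _ => ?_
    have hex : ∃ i'', f i'' = f i' := ⟨i', rfl⟩
    rw [dif_pos hex, hf hex.choose_spec]
  · intro j _ hj
    rw [dif_neg, measure_univ]
    rintro ⟨i', rfl⟩
    exact hj (Finset.mem_image_of_mem f (Finset.mem_univ i'))

end PiProb

/-- Currying an iid family indexed by a product into an iid random matrix. -/
lemma map_curry_pi (a b : ℕ) :
    Measure.map (fun x : (Fin a × Fin b) → ℝ => Matrix.of fun i j => x (i, j))
      (Measure.pi fun _ : Fin a × Fin b => unifMeasure) = rectMatrixMeasure a b := by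
  classical
  have hmeas : @Measurable ((Fin a × Fin b) → ℝ) (Matrix (Fin a) (Fin b) ℝ) _
      (matrixMeasurableSpace a b) (fun x => Matrix.of fun i j => x (i, j)) :=
    measurable_pi_iff.mpr fun i => measurable_pi_iff.mpr fun j => measurable_pi_apply (i, j)
  refine (Measure.pi_eq_generateFrom (fun _ => generateFrom_pi) (fun _ => isPiSystem_pi)
    (fun _ => ?_) fun s hs => ?_).symm
  · exact ⟨fun _ => Set.univ, fun _ => ⟨fun _ => Set.univ, by simp, by simp⟩,
      fun _ => by simp [measure_univ], by simp [Set.iUnion_const]⟩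
  · choose t ht hts using hs
    simp only [Set.mem_univ_pi, Set.mem_setOf_eq] at ht
    have hsm : MeasurableSet[matrixMeasurableSpace a b] (Set.pi Set.univ s) := by
      refine MeasurableSet.univ_pi fun i => ?_
      rw [← hts]
      exact MeasurableSet.univ_pi fun j => (ht i) j
    refine (Measure.map_apply hmeas hsm).trans ?_
    have hpre : (fun x : (Fin a × Fin b) → ℝ => (Matrix.of fun i j => x (i, j) :
          Matrix (Fin a) (Fin b) ℝ)) ⁻¹' (Set.pi Set.univ s)
          = Set.pi Set.univ fun p : Fin a × Fin b => t p.1 p.2 := by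
      ext x
      constructor
      · intro h p
        have h1 := Set.mem_univ_pi.mp h p.1
        rw [← hts p.1] at h1
        exact fun _ => Set.mem_univ_pi.mp h1 p.2
      · intro h
        refine Set.mem_univ_pi.mpr fun i => ?_
        rw [← hts i]
        exact Set.mem_univ_pi.mpr fun j => h (i, j) (Set.mem_univ _)

    rw [hpre, Measure.pi_pi, Fintype.prod_prod_type]
    refine Finset.prod_congr rfl fun i _ => ?_
    rw [← hts, Measure.pi_pi]

lemma measurable_uncurry_mx (a b : ℕ) :
    @Measurable ((Fin a × Fin b) → ℝ) (Matrix (Fin a) (Fin b) ℝ) _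
      (matrixMeasurableSpace a b) (fun x => Matrix.of fun i j => x (i, j)) :=
  measurable_pi_iff.mpr fun _ => measurable_pi_iff.mpr fun _ => measurable_pi_apply _

/-- zero set of a nonzero polynomial in the matrix entries is null. -/
lemma rect_poly_null (a b : ℕ) (P : MvPolynomial (Fin a × Fin b) ℝ) (hP : P ≠ 0) :
    rectMatrixMeasure a b {B | MvPolynomial.eval (fun p => B p.1 p.2) P = 0} = 0 := by
  classical
  have hSm : MeasurableSet[matrixMeasurableSpace a b]
      {B : Matrix (Fin a) (Fin b) ℝ | MvPolynomial.eval (fun p => B p.1 p.2) P = 0} := by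
    have : @Measurable (Matrix (Fin a) (Fin b) ℝ) ((Fin a × Fin b) → ℝ)
        (matrixMeasurableSpace a b) _ (fun B => fun p : Fin a × Fin b => B p.1 p.2) :=
      measurable_pi_iff.mpr fun p =>
        ((measurable_pi_apply p.2).comp (measurable_pi_apply p.1))
    exact ((measurable_mvpoly_eval P).comp this) (measurableSet_singleton 0)
  rw [← map_curry_pi a b]
  refine ((Measure.map_apply (measurable_uncurry_mx a b) hSm).trans ?_)
  have hpre : ((fun x : (Fin a × Fin b) → ℝ => (Matrix.of fun i j => x (i, j) :
      Matrix (Fin a) (Fin b) ℝ)) ⁻¹'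
        {B | MvPolynomial.eval (fun p => B p.1 p.2) P = 0})
      = {x | MvPolynomial.eval x P = 0} := by
    rfl
  rw [hpre]
  -- reindex to Fin (a * b)
  set f : Fin (a * b) ≃ Fin a × Fin b := finProdFinEquiv.symm with hf
  have mp := measurePreserving_piCongrLeft (fun _ : Fin a × Fin b => unifMeasure) f
  have happ : ∀ y : Fin (a * b) → ℝ,
      (MeasurableEquiv.piCongrLeft (fun _ => ℝ) f) y = y ∘ f.symm := by
    intro y
    funext p
    conv_lhs => rw [← f.apply_symm_apply p]
    rw [MeasurableEquiv.piCongrLeft_apply_apply]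
    rfl
  have hSm2 : MeasurableSet {x : Fin a × Fin b → ℝ | MvPolynomial.eval x P = 0} :=
    (measurable_mvpoly_eval P) (measurableSet_singleton 0)
  rw [← mp.measure_preimage hSm2.nullMeasurableSet]
  have : (⇑(MeasurableEquiv.piCongrLeft (fun _ => ℝ) f)) ⁻¹'
      {x : Fin a × Fin b → ℝ | MvPolynomial.eval x P = 0}
      = {y : Fin (a * b) → ℝ | MvPolynomial.eval y (MvPolynomial.rename f.symm P) = 0} := by
    ext y
    simp only [Set.mem_preimage, Set.mem_setOf_eq, happ y, MvPolynomial.eval_rename]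
  rw [this]
  refine mvpoly_null _ _ fun h => hP ?_
  have := (MvPolynomial.rename_injective (R := ℝ) (f.symm : Fin a × Fin b → Fin (a * b))
    f.symm.injective)
  apply this
  rw [h, map_zero]

/-- sign-flip invariance in 1D -/
lemma map_mul_sign (c : ℝ) (hc : c = 1 ∨ c = -1) :
    MeasurePreserving (fun x : ℝ => c * x) unifMeasure unifMeasure := by
  rcases hc with rfl | rfl
  · simp only [one_mul]; exact MeasurePreserving.id unifMeasure
  · have h : (fun x : ℝ => -1 * x) = Neg.neg := by funext x; ring
    rw [h]
    refine ⟨measurable_neg, ?_⟩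
    rw [unifMeasure, Measure.map_smul]
    congr 1
    have hicc : (Neg.neg ⁻¹' Set.Icc (-1 : ℝ) 1) = Set.Icc (-1 : ℝ) 1 := by
      ext x; simp [neg_le, le_neg, and_comm]
    conv_lhs => rw [← hicc]
    rw [← Measure.restrict_map measurable_neg measurableSet_Icc, Measure.map_neg_eq_self]

def sgn (b : Bool) : ℝ := if b then 1 else -1
lemma sgn_cases (b : Bool) : sgn b = 1 ∨ sgn b = -1 := by cases b <;> simp [sgn]
lemma sgn_ne_zero (b : Bool) : sgn b ≠ 0 := by rcases sgn_cases b with h | h <;> rw [h] <;> norm_num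
lemma sgn_mul_self (b : Bool) : sgn b * sgn b = 1 := by
  rcases sgn_cases b with h | h <;> rw [h] <;> norm_num
lemma sgn_not (b : Bool) : sgn (!b) = -sgn b := by cases b <;> simp [sgn]

def sgnv {k : ℕ} (u : Fin k → Bool) : Fin k → ℝ := fun i => sgn (u i)

/-- The sign-flip transformation. -/
def flipMx {k : ℕ} (u v : Fin k → Bool) (B : Matrix (Fin k) (Fin k) ℝ) :
    Matrix (Fin k) (Fin k) ℝ :=
  Matrix.of fun i j => sgn (u i) * B i j * sgn (v j)

lemma flipMx_measurePreserving {k : ℕ} (u v : Fin k → Bool) :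
    MeasurePreserving (flipMx u v) (rectMatrixMeasure k k) (rectMatrixMeasure k k) := by
  have : flipMx u v = fun B : Matrix (Fin k) (Fin k) ℝ =>
      fun i => (fun row : Fin k → ℝ => fun j => (sgn (u i) * sgn (v j)) * row j) (B i) := by
    funext B i j
    simp [flipMx]
    ring
  rw [this]
  exact measurePreserving_pi _ _ fun i =>
    measurePreserving_pi _ _ fun j => map_mul_sign _ (by
      rcases sgn_cases (u i) with h | h <;> rcases sgn_cases (v j) with h' | h' <;>
        rw [h, h'] <;> norm_num)

/-- Target event. -/
def TargetSet (k : ℕ) : Set (Matrix (Fin k) (Fin k) ℝ) :=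
  {B | IsUnit B.det ∧ (∀ i, 0 < ∑ j, B⁻¹ i j) ∧ (∀ j, 0 < ∑ i, B⁻¹ i j)}

/-- Generic matrices. -/
def GoodSet (k : ℕ) : Set (Matrix (Fin k) (Fin k) ℝ) :=
  {B | B.det ≠ 0 ∧ ∀ u : Fin k → Bool,
    (∀ i, (B.adjugate *ᵥ sgnv u) i ≠ 0) ∧ (∀ j, (sgnv u ᵥ* B.adjugate) j ≠ 0)}

noncomputable def Xmx (k : ℕ) : Matrix (Fin k) (Fin k) (MvPolynomial (Fin k × Fin k) ℝ) :=
  Matrix.of fun i j => MvPolynomial.X (i, j)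

lemma eval_mapMatrix_Xmx {k : ℕ} (B : Matrix (Fin k) (Fin k) ℝ) :
    (MvPolynomial.eval fun p : Fin k × Fin k => B p.1 p.2).mapMatrix (Xmx k) = B := by
  ext i j
  simp [Xmx]

lemma one_mapMatrix_Xmx {k : ℕ} :
    (MvPolynomial.eval fun p : Fin k × Fin k => if p.1 = p.2 then (1:ℝ) else 0).mapMatrix (Xmx k)
      = (1 : Matrix (Fin k) (Fin k) ℝ) := by
  ext i j
  simp [Xmx, Matrix.one_apply]

lemma eval_det_Xmx {k : ℕ} (B : Matrix (Fin k) (Fin k) ℝ) :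
    MvPolynomial.eval (fun p : Fin k × Fin k => B p.1 p.2) (Xmx k).det = B.det := by
  have h := RingHom.map_det (MvPolynomial.eval fun p : Fin k × Fin k => B p.1 p.2) (Xmx k)
  rw [eval_mapMatrix_Xmx] at h
  exact h.symm ▸ rfl

lemma eval_adjugate_Xmx {k : ℕ} (B : Matrix (Fin k) (Fin k) ℝ) (i j : Fin k) :
    MvPolynomial.eval (fun p : Fin k × Fin k => B p.1 p.2) ((Xmx k).adjugate i j)
      = B.adjugate i j := by
  have h := RingHom.map_adjugate (MvPolynomial.eval fun p : Fin k × Fin k => B p.1 p.2) (Xmx k)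
  rw [eval_mapMatrix_Xmx] at h
  have := congrArg (fun M : Matrix (Fin k) (Fin k) ℝ => M i j) h
  simpa using this

noncomputable def rowPoly {k : ℕ} (u : Fin k → Bool) (i : Fin k) :
    MvPolynomial (Fin k × Fin k) ℝ :=
  ∑ j, (Xmx k).adjugate i j * MvPolynomial.C (sgn (u j))

noncomputable def colPoly {k : ℕ} (u : Fin k → Bool) (i : Fin k) :
    MvPolynomial (Fin k × Fin k) ℝ :=
  ∑ j, MvPolynomial.C (sgn (u j)) * (Xmx k).adjugate j i

lemma eval_rowPoly {k : ℕ} (B : Matrix (Fin k) (Fin k) ℝ) (u : Fin k → Bool) (i : Fin k) :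
    MvPolynomial.eval (fun p : Fin k × Fin k => B p.1 p.2) (rowPoly u i)
      = (B.adjugate *ᵥ sgnv u) i := by
  rw [rowPoly, map_sum, Matrix.mulVec]
  refine Finset.sum_congr rfl fun j _ => ?_
  rw [_root_.map_mul, MvPolynomial.eval_C, eval_adjugate_Xmx]
  rfl

lemma eval_colPoly {k : ℕ} (B : Matrix (Fin k) (Fin k) ℝ) (u : Fin k → Bool) (i : Fin k) :
    MvPolynomial.eval (fun p : Fin k × Fin k => B p.1 p.2) (colPoly u i)
      = (sgnv u ᵥ* B.adjugate) i := by
  rw [colPoly, map_sum, Matrix.vecMul]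
  refine Finset.sum_congr rfl fun j _ => ?_
  rw [_root_.map_mul, MvPolynomial.eval_C, eval_adjugate_Xmx]
  rfl

lemma det_Xmx_ne_zero {k : ℕ} : (Xmx k).det ≠ 0 := by
  intro h
  have := eval_det_Xmx (1 : Matrix (Fin k) (Fin k) ℝ)
  rw [h, map_zero, Matrix.det_one] at this
  exact one_ne_zero this.symm

lemma rowPoly_ne_zero {k : ℕ} (u : Fin k → Bool) (i : Fin k) : rowPoly u i ≠ 0 := by
  intro h
  have := eval_rowPoly (1 : Matrix (Fin k) (Fin k) ℝ) u i
  rw [h, map_zero, Matrix.adjugate_one, Matrix.one_mulVec] at this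
  exact sgn_ne_zero (u i) this.symm

lemma colPoly_ne_zero {k : ℕ} (u : Fin k → Bool) (i : Fin k) : colPoly u i ≠ 0 := by
  intro h
  have := eval_colPoly (1 : Matrix (Fin k) (Fin k) ℝ) u i
  rw [h, map_zero, Matrix.adjugate_one, Matrix.vecMul_one] at this
  exact sgn_ne_zero (u i) this.symm

lemma goodSet_ae (k : ℕ) : rectMatrixMeasure k k (GoodSet k)ᶜ = 0 := by
  classical
  have hsub : (GoodSet k)ᶜ ⊆
      {B : Matrix (Fin k) (Fin k) ℝ |
        MvPolynomial.eval (fun p => B p.1 p.2) (Xmx k).det = 0} ∪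
      ⋃ u : Fin k → Bool, ⋃ i : Fin k,
        ({B : Matrix (Fin k) (Fin k) ℝ |
            MvPolynomial.eval (fun p => B p.1 p.2) (rowPoly u i) = 0} ∪
         {B : Matrix (Fin k) (Fin k) ℝ |
            MvPolynomial.eval (fun p => B p.1 p.2) (colPoly u i) = 0}) := by
    intro B hB
    simp only [GoodSet, Set.mem_compl_iff, Set.mem_setOf_eq] at hB
    by_cases hdet : B.det = 0
    · left
      show MvPolynomial.eval _ (Xmx k).det = 0
      rw [eval_det_Xmx]
      exact hdet
    · obtain ⟨u, hu⟩ := not_forall.mp fun hall => hB ⟨hdet, hall⟩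
      right
      rw [not_and_or] at hu
      refine Set.mem_iUnion.mpr ⟨u, ?_⟩
      rcases hu with hu | hu
      · push_neg at hu
        obtain ⟨i, hi⟩ := hu
        refine Set.mem_iUnion.mpr ⟨i, Or.inl ?_⟩
        show MvPolynomial.eval _ _ = 0
        rw [eval_rowPoly]
        exact hi
      · push_neg at hu
        obtain ⟨i, hi⟩ := hu
        refine Set.mem_iUnion.mpr ⟨i, Or.inr ?_⟩
        show MvPolynomial.eval _ _ = 0
        rw [eval_colPoly]
        exact hi
  refine measure_mono_null hsub ?_
  refine measure_union_null (rect_poly_null k k _ det_Xmx_ne_zero) ?_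
  refine (measure_iUnion_null_iff).mpr fun u => ?_
  refine (measure_iUnion_null_iff).mpr fun i => ?_
  exact measure_union_null (rect_poly_null k k _ (rowPoly_ne_zero u i))
    (rect_poly_null k k _ (colPoly_ne_zero u i))

section Meas
variable {α : Type*} [MeasurableSpace α] {k m n : ℕ}

lemma measurable_matrix_det {M : α → Matrix (Fin k) (Fin k) ℝ}
    (h : ∀ i j, Measurable fun a => M a i j) : Measurable fun a => (M a).det := by
  simp_rw [Matrix.det_apply']
  exact Finset.measurable_sum _ fun σ _ =>
    (Finset.measurable_prod _ fun i _ => h _ _).const_mul _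

lemma measurable_matrix_entry {M : α → Matrix (Fin m) (Fin n) ℝ} (hM : Measurable M) (i : Fin m)
    (j : Fin n) : Measurable fun a => M a i j :=
  ((measurable_pi_apply j).comp ((measurable_pi_apply i).comp hM))

lemma measurable_inv_entry (i j : Fin k) :
    Measurable fun B : Matrix (Fin k) (Fin k) ℝ => B⁻¹ i j := by
  have hadj : Measurable fun B : Matrix (Fin k) (Fin k) ℝ => B.adjugate i j := by
    simp_rw [Matrix.adjugate_apply]
    refine measurable_matrix_det fun a b => ?_
    simp_rw [Matrix.updateRow_apply]
    by_cases hab : a = j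
    · simpa [hab] using measurable_const
    · simpa [hab] using measurable_matrix_entry measurable_id a b
  have hdet : Measurable fun B : Matrix (Fin k) (Fin k) ℝ => B.det :=
    measurable_matrix_det fun i j => measurable_matrix_entry measurable_id i j
  have : (fun B : Matrix (Fin k) (Fin k) ℝ => B⁻¹ i j)
      = fun B => (B.det)⁻¹ * B.adjugate i j := by
    funext B
    rw [Matrix.inv_def]
    simp [Ring.inverse_eq_inv']
  rw [this]
  exact (measurable_inv.comp hdet).mul hadj

lemma measurableSet_targetSet (k : ℕ) : MeasurableSet (TargetSet k) := by
  have hdet : Measurable fun B : Matrix (Fin k) (Fin k) ℝ => B.det :=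
    measurable_matrix_det fun i j => measurable_matrix_entry measurable_id i j
  have h1 : MeasurableSet {B : Matrix (Fin k) (Fin k) ℝ | IsUnit B.det} := by
    have : {B : Matrix (Fin k) (Fin k) ℝ | IsUnit B.det}
        = (fun B : Matrix (Fin k) (Fin k) ℝ => B.det) ⁻¹' ({0}ᶜ) := by
      ext B; simp [isUnit_iff_ne_zero]
    rw [this]
    exact hdet (measurableSet_singleton 0).compl
  have h2 : ∀ i : Fin k, MeasurableSet {B : Matrix (Fin k) (Fin k) ℝ | 0 < ∑ j, B⁻¹ i j} :=
    fun i => measurableSet_lt measurable_const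
      (Finset.measurable_sum _ fun j _ => measurable_inv_entry i j)
  have h3 : ∀ j : Fin k, MeasurableSet {B : Matrix (Fin k) (Fin k) ℝ | 0 < ∑ i, B⁻¹ i j} :=
    fun j => measurableSet_lt measurable_const
      (Finset.measurable_sum _ fun i _ => measurable_inv_entry i j)
  have : TargetSet k = {B : Matrix (Fin k) (Fin k) ℝ | IsUnit B.det}
      ∩ ((⋂ i, {B | 0 < ∑ j, B⁻¹ i j}) ∩ ⋂ j, {B | 0 < ∑ i, B⁻¹ i j}) := by
    ext B
    simp only [TargetSet, Set.mem_setOf_eq, Set.mem_inter_iff, Set.mem_iInter]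
  rw [this]
  exact h1.inter ((MeasurableSet.iInter h2).inter (MeasurableSet.iInter h3))

end Meas

/-- The covering lemma: every good matrix is carried into the target by some sign flip. -/
lemma good_subset_cover {k : ℕ} (i0 : Fin k) :
    GoodSet k ⊆ ⋃ p ∈ Finset.filter
      (fun p : (Fin k → Bool) × (Fin k → Bool) => p.1 i0 = true) Finset.univ,
      flipMx p.2 p.1 ⁻¹' TargetSet k := by
  classical
  intro B hB
  obtain ⟨hdet, hgen⟩ := hB
  have hdetU : IsUnit B.det := isUnit_iff_ne_zero.mpr hdet
  set C := B⁻¹ with hC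
  have hBC : B * C = 1 := Matrix.mul_nonsing_inv _ hdetU
  have hCne : ∀ v : Fin k → Bool, ∀ i, (C *ᵥ sgnv v) i ≠ 0 := by
    intro v i
    rw [hC, Matrix.inv_def, Matrix.smul_mulVec, Pi.smul_apply, smul_eq_mul,
      Ring.inverse_eq_inv']
    exact mul_ne_zero (inv_ne_zero hdet) ((hgen v).1 i)
  have hCne' : ∀ u : Fin k → Bool, ∀ j, (sgnv u ᵥ* C) j ≠ 0 := by
    intro u j
    rw [hC, Matrix.inv_def]
    have : (sgnv u ᵥ* (Ring.inverse B.det • B.adjugate)) j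
        = Ring.inverse B.det * (sgnv u ᵥ* B.adjugate) j := by
      simp only [Matrix.vecMul, dotProduct, Matrix.smul_apply, smul_eq_mul, Finset.mul_sum]
      exact Finset.sum_congr rfl fun i _ => by ring
    rw [this, Ring.inverse_eq_inv']
    exact mul_ne_zero (inv_ne_zero hdet) ((hgen u).2 j)
  -- maximize
  set F : (Fin k → Bool) × (Fin k → Bool) → ℝ :=
    fun p => ∑ i, ∑ j, sgn (p.1 i) * C i j * sgn (p.2 j) with hF
  obtain ⟨p0, -, hmax0⟩ := Finset.exists_max_image Finset.univ F ⟨(fun _ => true, fun _ => true),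
    Finset.mem_univ _⟩
  set p1 : (Fin k → Bool) × (Fin k → Bool) :=
    if p0.1 i0 = true then p0 else (fun i => !p0.1 i, fun j => !p0.2 j) with hp1
  have hFp1 : F p1 = F p0 := by
    rw [hp1]
    split
    · rfl
    · simp only [hF]
      refine Finset.sum_congr rfl fun i _ => Finset.sum_congr rfl fun j _ => ?_
      rw [sgn_not, sgn_not]
      ring
  have hmax : ∀ p, F p ≤ F p1 := fun p => hFp1 ▸ hmax0 p (Finset.mem_univ _)
  have hp1i0 : p1.1 i0 = true := by
    rw [hp1]
    split
    · assumption
    · next h => simp [Bool.not_eq_true _ ▸ (Bool.eq_false_iff.mpr h)]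
  obtain ⟨u, v⟩ := p1
  simp only at hp1i0 hmax
  -- row positivity at the maximizer
  have hrow : ∀ i, 0 < sgn (u i) * (C *ᵥ sgnv v) i := by
    intro i
    rcases (mul_ne_zero (sgn_ne_zero (u i)) (hCne v i)).lt_or_gt with hneg | hpos
    · exfalso
      have hle := hmax (Function.update u i (!(u i)), v)
      simp only [hF] at hle
      have hdiff : (∑ i', ∑ j, sgn (u i') * C i' j * sgn (v j))
          - (∑ i', ∑ j, sgn (Function.update u i (!(u i)) i') * C i' j * sgn (v j))
          = 2 * (sgn (u i) * (C *ᵥ sgnv v) i) := by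
        rw [← Finset.sum_sub_distrib]
        rw [Finset.sum_eq_single i]
        · rw [← Finset.sum_sub_distrib, Function.update_self, sgn_not, Matrix.mulVec,
            dotProduct, Finset.mul_sum, Finset.mul_sum]
          refine Finset.sum_congr rfl fun j _ => ?_
          simp only [sgnv]
          ring
        · intro i' _ hi'
          rw [Function.update_of_ne hi']
          ring_nf
        · exact fun h => absurd (Finset.mem_univ i) h
      nlinarith [hle, hdiff]
    · exact hpos
  -- column positivity at the maximizer
  have hcol : ∀ j, 0 < sgn (v j) * (sgnv u ᵥ* C) j := by
    intro j
    rcases (mul_ne_zero (sgn_ne_zero (v j)) (hCne' u j)).lt_or_gt with hneg | hpos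
    · exfalso
      have hle := hmax (u, Function.update v j (!(v j)))
      simp only [hF] at hle
      have hdiff : (∑ i, ∑ j', sgn (u i) * C i j' * sgn (v j'))
          - (∑ i, ∑ j', sgn (u i) * C i j' * sgn (Function.update v j (!(v j)) j'))
          = 2 * (sgn (v j) * (sgnv u ᵥ* C) j) := by
        rw [← Finset.sum_sub_distrib]
        simp_rw [← Finset.sum_sub_distrib]
        rw [Finset.sum_comm]
        rw [Finset.sum_eq_single j]
        · rw [Function.update_self, sgn_not, Matrix.vecMul, dotProduct, Finset.mul_sum,
            Finset.mul_sum]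
          refine Finset.sum_congr rfl fun i _ => ?_
          simp only [sgnv]
          ring
        · intro j' _ hj'
          rw [Function.update_of_ne hj']
          simp
        · exact fun h => absurd (Finset.mem_univ j) h
      nlinarith [hle, hdiff]
    · exact hpos
  -- conclude
  refine Set.mem_biUnion (Finset.mem_filter.mpr ⟨Finset.mem_univ (u, v), hp1i0⟩) ?_
  show flipMx v u B ∈ TargetSet k
  set C' : Matrix (Fin k) (Fin k) ℝ := Matrix.of fun i j => sgn (u i) * C i j * sgn (v j) with hC'
  have hright : flipMx v u B * C' = 1 := by
    ext i l
    rw [Matrix.mul_apply]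
    have : ∀ j, flipMx v u B i j * C' j l
        = sgn (v i) * (B i j * C j l) * sgn (v l) := by
      intro j
      show (sgn (v i) * B i j * sgn (u j)) * (sgn (u j) * C j l * sgn (v l)) = _
      rw [show (sgn (v i) * B i j * sgn (u j)) * (sgn (u j) * C j l * sgn (v l))
        = (sgn (u j) * sgn (u j)) * (sgn (v i) * (B i j * C j l) * sgn (v l)) from by ring,
        sgn_mul_self, one_mul]
    simp_rw [this]
    rw [← Finset.sum_mul, ← Finset.mul_sum]
    have hBCil : ∑ j, B i j * C j l = (1 : Matrix (Fin k) (Fin k) ℝ) i l := by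
      rw [← Matrix.mul_apply, hBC]
    rw [hBCil]
    by_cases hil : i = l
    · subst hil
      simp [Matrix.one_apply_eq, sgn_mul_self]
    · simp [Matrix.one_apply_ne hil]
  refine ⟨Matrix.isUnit_det_of_right_inverse hright, ?_, ?_⟩
  · intro i
    rw [Matrix.inv_eq_right_inv hright]
    have : ∑ j, C' i j = sgn (u i) * (C *ᵥ sgnv v) i := by
      rw [Matrix.mulVec, dotProduct, Finset.mul_sum]
      refine Finset.sum_congr rfl fun j _ => ?_
      show sgn (u i) * C i j * sgn (v j) = sgn (u i) * (C i j * sgnv v j)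
      rw [sgnv]
      ring
    rw [this]
    exact hrow i
  · intro j
    rw [Matrix.inv_eq_right_inv hright]
    have : ∑ i, C' i j = sgn (v j) * (sgnv u ᵥ* C) j := by
      rw [Matrix.vecMul, dotProduct, Finset.mul_sum]
      refine Finset.sum_congr rfl fun i _ => ?_
      show sgn (u i) * C i j * sgn (v j) = sgn (v j) * (sgnv u i * C i j)
      rw [sgnv]
      ring
    rw [this]
    exact hcol j

instance rect_prob (m n : ℕ) : IsProbabilityMeasure (rectMatrixMeasure m n) := by
  constructor
  rw [rectMatrixMeasure]
  refine (Measure.pi_univ _).trans ?_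
  have h : ∀ _i : Fin m, (Measure.pi fun _ : Fin n => unifMeasure) Set.univ = 1 := fun _ => by
    rw [Measure.pi_univ]; simp
  simp [h]

/-- the key probability lower bound -/
lemma target_bound {k : ℕ} (i0 : Fin k) :
    2 ≤ (4 : ENNReal) ^ k * rectMatrixMeasure k k (TargetSet k) := by
  classical
  set S : Finset ((Fin k → Bool) × (Fin k → Bool)) :=
    Finset.filter (fun p => p.1 i0 = true) Finset.univ with hS
  have hcover : (Set.univ : Set (Matrix (Fin k) (Fin k) ℝ)) ⊆
      (GoodSet k)ᶜ ∪ ⋃ p ∈ S, flipMx p.2 p.1 ⁻¹' TargetSet k := by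
    intro B _
    by_cases hB : B ∈ GoodSet k
    · exact Or.inr (good_subset_cover i0 hB)
    · exact Or.inl hB
  have h1 : (1 : ENNReal) ≤ S.card * rectMatrixMeasure k k (TargetSet k) := by
    calc (1 : ENNReal) = rectMatrixMeasure k k Set.univ := (measure_univ).symm
    _ ≤ rectMatrixMeasure k k ((GoodSet k)ᶜ ∪ ⋃ p ∈ S, flipMx p.2 p.1 ⁻¹' TargetSet k) := measure_mono hcover
    _ ≤ rectMatrixMeasure k k (GoodSet k)ᶜ + rectMatrixMeasure k k (⋃ p ∈ S, flipMx p.2 p.1 ⁻¹' TargetSet k) := measure_union_le _ _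
    _ = rectMatrixMeasure k k (⋃ p ∈ S, flipMx p.2 p.1 ⁻¹' TargetSet k) := by rw [goodSet_ae k, zero_add]
    _ ≤ ∑ p ∈ S, rectMatrixMeasure k k (flipMx p.2 p.1 ⁻¹' TargetSet k) := measure_biUnion_finset_le S _
    _ = ∑ p ∈ S, rectMatrixMeasure k k (TargetSet k) := Finset.sum_congr rfl fun p _ =>
        (flipMx_measurePreserving p.2 p.1).measure_preimage
          (measurableSet_targetSet k).nullMeasurableSet
    _ = S.card * rectMatrixMeasure k k (TargetSet k) := by rw [Finset.sum_const, nsmul_eq_mul]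
  have hcard : S.card + S.card = 4 ^ k := by
    have hneg : (Finset.filter (fun p : (Fin k → Bool) × (Fin k → Bool) => ¬p.1 i0 = true)
        Finset.univ).card = S.card := by
      refine (Finset.card_bij (fun p _ => ((fun i => !p.1 i), p.2)) ?_ ?_ ?_).symm
      · intro p hp
        simp only [hS, Finset.mem_filter, Finset.mem_univ, true_and] at hp ⊢
        simp [hp]
      · intro p hp q hq h
        simp only [Prod.mk.injEq] at h
        obtain ⟨h1', h2'⟩ := h
        ext1
        · funext i
          have := congrFun h1' i
          exact Bool.not_inj this
        · exact h2'
      · intro p hp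
        simp only [Finset.mem_filter, Finset.mem_univ, true_and] at hp
        refine ⟨((fun i => !p.1 i), p.2), ?_, ?_⟩
        · simp only [hS, Finset.mem_filter, Finset.mem_univ, true_and]
          simpa using hp
        · simp
    have htot := Finset.card_filter_add_card_filter_not
      (s := (Finset.univ : Finset ((Fin k → Bool) × (Fin k → Bool))))
      (fun p => p.1 i0 = true)
    rw [hneg] at htot
    rw [← hS] at htot
    rw [htot]
    simp only [Finset.card_univ, Fintype.card_prod, Fintype.card_fun, Fintype.card_bool,
      Fintype.card_fin]
    rw [← mul_pow]
    norm_num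
  calc (2 : ENNReal) = 2 * 1 := (mul_one 2).symm
  _ ≤ 2 * (S.card * rectMatrixMeasure k k (TargetSet k)) := mul_le_mul_right h1 2
  _ = ((S.card + S.card : ℕ) : ENNReal) * rectMatrixMeasure k k (TargetSet k) := by
      push_cast; ring
  _ = ((4 ^ k : ℕ) : ENNReal) * rectMatrixMeasure k k (TargetSet k) := by rw [hcard]
  _ = (4 : ENNReal) ^ k * rectMatrixMeasure k k (TargetSet k) := by push_cast; ring

lemma measurable_submatrix {m n k : ℕ} (r : Fin k → Fin m) (c : Fin k → Fin n) :
    @Measurable (Matrix (Fin m) (Fin n) ℝ) (Matrix (Fin k) (Fin k) ℝ)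
      (matrixMeasurableSpace m n) (matrixMeasurableSpace k k)
      (fun Δ => Δ.submatrix r c) :=
  measurable_pi_iff.mpr fun i => measurable_pi_iff.mpr fun j =>
    (measurable_pi_apply (c j)).comp (measurable_pi_apply (r i))

lemma map_submatrix {m n k : ℕ} (r : Fin k → Fin m) (c : Fin k → Fin n)
    (hr : Function.Injective r) (hc : Function.Injective c) :
    Measure.map (fun Δ : Matrix (Fin m) (Fin n) ℝ => Δ.submatrix r c) (rectMatrixMeasure m n)
      = rectMatrixMeasure k k := by
  rw [← map_curry_pi m n,
    Measure.map_map (measurable_submatrix r c) (measurable_uncurry_mx m n)]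
  have hcomp : ((fun Δ : Matrix (Fin m) (Fin n) ℝ => Δ.submatrix r c)
        ∘ (fun x : (Fin m × Fin n) → ℝ => Matrix.of fun i j => x (i, j)))
      = (fun x : (Fin k × Fin k) → ℝ => Matrix.of fun i j => x (i, j))
        ∘ (fun x : (Fin m × Fin n) → ℝ => x ∘ Prod.map r c) := by
    funext x
    ext i j
    rfl
  rw [hcomp, ← Measure.map_map (measurable_uncurry_mx k k) (measurable_comp_precomp _),
    map_precomp_pi _ _ (Function.Injective.prodMap hr hc), map_curry_pi]

lemma event_measure {m n k : ℕ} (r : Fin k → Fin m) (c : Fin k → Fin n)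
    (hr : StrictMono r) (hc : StrictMono c) :
    rectMatrixMeasure m n {Δ | IsEquilibriumSubmatrix Δ r c}
      = rectMatrixMeasure k k (TargetSet k) := by
  have hev : {Δ : Matrix (Fin m) (Fin n) ℝ | IsEquilibriumSubmatrix Δ r c}
      = (fun Δ : Matrix (Fin m) (Fin n) ℝ => Δ.submatrix r c) ⁻¹' TargetSet k := by
    ext Δ
    simp only [IsEquilibriumSubmatrix, Set.mem_setOf_eq, Set.mem_preimage, TargetSet, hr, hc,
      true_and]
  rw [hev]
  exact (MeasurePreserving.mk (measurable_submatrix r c)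
    (map_submatrix r c hr.injective hc.injective)).measure_preimage
    (measurableSet_targetSet k).nullMeasurableSet

lemma measurableSet_event {m n k : ℕ} (r : Fin k → Fin m) (c : Fin k → Fin n) :
    MeasurableSet {Δ : Matrix (Fin m) (Fin n) ℝ | IsEquilibriumSubmatrix Δ r c} := by
  by_cases hr : StrictMono r
  · by_cases hc : StrictMono c
    · have hev : {Δ : Matrix (Fin m) (Fin n) ℝ | IsEquilibriumSubmatrix Δ r c}
          = (fun Δ : Matrix (Fin m) (Fin n) ℝ => Δ.submatrix r c) ⁻¹' TargetSet k := by
        ext Δ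
        simp only [IsEquilibriumSubmatrix, Set.mem_setOf_eq, Set.mem_preimage, TargetSet, hr, hc,
          true_and]
      rw [hev]
      exact measurable_submatrix r c (measurableSet_targetSet k)
    · have : {Δ : Matrix (Fin m) (Fin n) ℝ | IsEquilibriumSubmatrix Δ r c} = ∅ := by
        ext Δ; simp [IsEquilibriumSubmatrix, hc]
      rw [this]; exact MeasurableSet.empty
  · have : {Δ : Matrix (Fin m) (Fin n) ℝ | IsEquilibriumSubmatrix Δ r c} = ∅ := by
      ext Δ; simp [IsEquilibriumSubmatrix, hr]
    rw [this]; exact MeasurableSet.empty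

open scoped Classical in
lemma card_strictMono_maps (k m : ℕ) :
    (Finset.univ.filter fun r : Fin k → Fin m => StrictMono r).card = Nat.choose m k := by
  classical
  have hbij : (Finset.univ.filter fun r : Fin k → Fin m => StrictMono r).card
      = (Finset.powersetCard k (Finset.univ : Finset (Fin m))).card := by
    refine Finset.card_bij (fun r _ => Finset.image r Finset.univ) ?_ ?_ ?_
    · intro r hr
      rw [Finset.mem_filter] at hr
      rw [Finset.mem_powersetCard]
      refine ⟨Finset.subset_univ _, ?_⟩
      rw [Finset.card_image_of_injective _ hr.2.injective, Finset.card_univ, Fintype.card_fin]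
    · intro r hr q hq h
      rw [Finset.mem_filter] at hr hq
      have hr' := hr.2
      have hq' := hq.2
      have hcard : (Finset.image r Finset.univ).card = k := by
        rw [Finset.card_image_of_injective _ hr'.injective, Finset.card_univ, Fintype.card_fin]
      have e1 := Finset.orderEmbOfFin_unique hcard
        (f := r) (fun x => Finset.mem_image_of_mem r (Finset.mem_univ x)) hr'
      have h' : Finset.image r Finset.univ = Finset.image q Finset.univ := h
      have e2 := Finset.orderEmbOfFin_unique hcard
        (f := q) (fun x => h' ▸ Finset.mem_image_of_mem q (Finset.mem_univ x)) hq'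
      rw [e1, e2]
    · intro s hs
      rw [Finset.mem_powersetCard] at hs
      refine ⟨s.orderEmbOfFin hs.2, ?_, ?_⟩
      · rw [Finset.mem_filter]
        exact ⟨Finset.mem_univ _, (s.orderEmbOfFin hs.2).strictMono⟩
      · apply Finset.coe_injective
        rw [Finset.coe_image, Finset.coe_univ, Set.image_univ, Finset.range_orderEmbOfFin]
  rw [hbij, Finset.card_powersetCard, Finset.card_univ, Fintype.card_fin]

lemma nat_pow_le_choose {k m : ℕ} (hkm : k ≤ m) : m ^ k ≤ k ^ k * Nat.choose m k := by
  have key : m ^ k * k.factorial ≤ k ^ k * m.descFactorial k := by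
    have : ∀ i ∈ Finset.range k, m * (k - i) ≤ k * (m - i) := by
      intro i hi
      rw [Finset.mem_range] at hi
      have hik : i ≤ k := le_of_lt hi
      have h1 : m * (k - i) + m * i = m * k := by rw [← Nat.mul_add, Nat.sub_add_cancel hik]
      have h2 : k * (m - i) + k * i = k * m := by
        rw [← Nat.mul_add, Nat.sub_add_cancel (hik.trans hkm)]
      have h3 : k * i ≤ m * i := Nat.mul_le_mul_right i hkm
      have h4 : m * k = k * m := Nat.mul_comm m k
      omega
    calc m ^ k * k.factorial = ∏ i ∈ Finset.range k, (m * (k - i)) := by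
          rw [Finset.prod_mul_distrib, Finset.prod_const, Finset.card_range]
          congr 1
          rw [← Finset.prod_range_add_one_eq_factorial, ← Finset.prod_range_reflect fun j => j + 1]
          refine Finset.prod_congr rfl fun i hi => ?_
          rw [Finset.mem_range] at hi
          omega
    _ ≤ ∏ i ∈ Finset.range k, (k * (m - i)) := Finset.prod_le_prod' this
    _ = k ^ k * m.descFactorial k := by
          rw [Finset.prod_mul_distrib, Finset.prod_const, Finset.card_range,
            Nat.descFactorial_eq_prod_range]
  rw [Nat.descFactorial_eq_factorial_mul_choose] at key
  have h : m ^ k * k.factorial ≤ (k ^ k * m.choose k) * k.factorial :=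
    key.trans (le_of_eq (by ring))
  exact Nat.le_of_mul_le_mul_right h (Nat.factorial_pos k)


theorem expected_number_of_equilibria (m n k : ℕ) (hk : 1 ≤ k) (hkm : k ≤ m) (hkn : k ≤ n) :
    ENNReal.ofReal (2 * ((m * n : ℝ) / (4 * k ^ 2)) ^ k) ≤
      ∫⁻ Δ, (({rc : (Fin k → Fin m) × (Fin k → Fin n) |
          IsEquilibriumSubmatrix Δ rc.1 rc.2} : Set _).ncard : ENNReal)
        ∂(rectMatrixMeasure m n) := by
  classical
  set i0 : Fin k := ⟨0, hk⟩
  set t := rectMatrixMeasure k k (TargetSet k) with hT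
  -- counting rewrite of the integrand
  have hcount : ∀ Δ : Matrix (Fin m) (Fin n) ℝ,
      (({rc : (Fin k → Fin m) × (Fin k → Fin n) |
          IsEquilibriumSubmatrix Δ rc.1 rc.2} : Set _).ncard : ENNReal)
      = ∑ rc : (Fin k → Fin m) × (Fin k → Fin n),
          Set.indicator {Δ' : Matrix (Fin m) (Fin n) ℝ | IsEquilibriumSubmatrix Δ' rc.1 rc.2}
            (fun _ => (1 : ENNReal)) Δ := by
    intro Δ
    rw [Set.ncard_eq_toFinset_card', Set.toFinset_setOf, Finset.card_filter]
    push_cast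
    refine Finset.sum_congr rfl fun rc _ => ?_
    rw [Set.indicator_apply]
    by_cases h : IsEquilibriumSubmatrix Δ rc.1 rc.2 <;> simp [h]
  rw [lintegral_congr hcount, lintegral_finset_sum _
    (fun rc _ => measurable_const.indicator (measurableSet_event rc.1 rc.2))]
  have hint : ∀ rc : (Fin k → Fin m) × (Fin k → Fin n),
      ∫⁻ Δ, Set.indicator {Δ' : Matrix (Fin m) (Fin n) ℝ | IsEquilibriumSubmatrix Δ' rc.1 rc.2}
          (fun _ => (1 : ENNReal)) Δ ∂(rectMatrixMeasure m n)
        = rectMatrixMeasure m n {Δ | IsEquilibriumSubmatrix Δ rc.1 rc.2} :=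
    fun rc => lintegral_indicator_one (measurableSet_event rc.1 rc.2)
  simp_rw [hint]
  -- restrict the sum to pairs of strictly monotone maps
  set SMr : Finset (Fin k → Fin m) := Finset.univ.filter StrictMono with hSMr
  set SMc : Finset (Fin k → Fin n) := Finset.univ.filter StrictMono with hSMc
  have hsum : ((SMr.card * SMc.card : ℕ) : ENNReal) * t
      ≤ ∑ rc : (Fin k → Fin m) × (Fin k → Fin n),
          rectMatrixMeasure m n {Δ | IsEquilibriumSubmatrix Δ rc.1 rc.2} := by
    have hsub : ∑ rc ∈ SMr ×ˢ SMc,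
        rectMatrixMeasure m n {Δ | IsEquilibriumSubmatrix Δ rc.1 rc.2}
        ≤ ∑ rc : (Fin k → Fin m) × (Fin k → Fin n),
          rectMatrixMeasure m n {Δ | IsEquilibriumSubmatrix Δ rc.1 rc.2} :=
      Finset.sum_le_sum_of_subset (Finset.subset_univ _)
    refine le_trans (le_of_eq ?_) hsub
    have : ∀ rc ∈ SMr ×ˢ SMc,
        rectMatrixMeasure m n {Δ | IsEquilibriumSubmatrix Δ rc.1 rc.2} = t := by
      intro rc hrc
      rw [Finset.mem_product, hSMr, hSMc, Finset.mem_filter, Finset.mem_filter] at hrc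
      exact event_measure rc.1 rc.2 hrc.1.2 hrc.2.2
    rw [Finset.sum_congr rfl this, Finset.sum_const, Finset.card_product, nsmul_eq_mul]
  refine le_trans ?_ hsum
  -- the probability bound for a single event
  have hbound := target_bound i0
  rw [← hT] at hbound
  have ht : ENNReal.ofReal (2 / 4 ^ k) ≤ t := by
    have h4 : ENNReal.ofReal ((2 : ℝ) / 4 ^ k) = 2 / 4 ^ k := by
      rw [ENNReal.ofReal_div_of_pos (by positivity)]
      norm_num
    rw [h4, ENNReal.div_le_iff_le_mul (Or.inl (by positivity)) (Or.inl (by simp))]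
    rw [mul_comm]
    exact hbound
  -- cardinalities
  have hcm : ((m : ℝ) ^ k) ≤ (k : ℝ) ^ k * SMr.card := by
    rw [hSMr, card_strictMono_maps]
    exact_mod_cast nat_pow_le_choose hkm
  have hcn : ((n : ℝ) ^ k) ≤ (k : ℝ) ^ k * SMc.card := by
    rw [hSMc, card_strictMono_maps]
    exact_mod_cast nat_pow_le_choose hkn
  have hk0 : (0 : ℝ) < (k : ℝ) ^ k := by positivity
  -- real-number inequality
  have hreal : 2 * ((m * n : ℝ) / (4 * k ^ 2)) ^ k
      ≤ ((SMr.card * SMc.card : ℕ) : ℝ) * (2 / 4 ^ k) := by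
    have hmk : (m : ℝ) ^ k / (k : ℝ) ^ k ≤ (SMr.card : ℝ) :=
      (div_le_iff₀ hk0).mpr (by linarith [hcm])
    have hnk : (n : ℝ) ^ k / (k : ℝ) ^ k ≤ (SMc.card : ℝ) :=
      (div_le_iff₀ hk0).mpr (by linarith [hcn])
    have hkey : ((m * n : ℝ) / (4 * k ^ 2)) ^ k
        = ((m : ℝ) ^ k / (k : ℝ) ^ k) * ((n : ℝ) ^ k / (k : ℝ) ^ k) / 4 ^ k := by
      have h2 : ((k : ℝ) ^ 2) ^ k = (k : ℝ) ^ k * (k : ℝ) ^ k := by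
        rw [← pow_mul, two_mul, pow_add]
      rw [div_pow, mul_pow, mul_pow, h2, div_mul_div_comm, div_div]
      ring_nf
    rw [hkey]
    push_cast
    have h1 : ((m : ℝ) ^ k / (k : ℝ) ^ k) * ((n : ℝ) ^ k / (k : ℝ) ^ k)
        ≤ (SMr.card : ℝ) * (SMc.card : ℝ) := by
      refine mul_le_mul hmk hnk (by positivity) ?_
      exact le_trans (by positivity) hmk
    calc 2 * (((m : ℝ) ^ k / (k : ℝ) ^ k) * ((n : ℝ) ^ k / (k : ℝ) ^ k) / 4 ^ k)
        = (((m : ℝ) ^ k / (k : ℝ) ^ k) * ((n : ℝ) ^ k / (k : ℝ) ^ k)) * (2 / 4 ^ k) := by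
          ring
    _ ≤ ((SMr.card : ℝ) * (SMc.card : ℝ)) * (2 / 4 ^ k) := by
          refine mul_le_mul_of_nonneg_right h1 (by positivity)
  calc ENNReal.ofReal (2 * ((m * n : ℝ) / (4 * k ^ 2)) ^ k)
      ≤ ENNReal.ofReal (((SMr.card * SMc.card : ℕ) : ℝ) * (2 / 4 ^ k)) :=
        ENNReal.ofReal_le_ofReal hreal
  _ = ((SMr.card * SMc.card : ℕ) : ENNReal) * ENNReal.ofReal (2 / 4 ^ k) := by
        rw [ENNReal.ofReal_mul (by positivity), ENNReal.ofReal_natCast]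
  _ ≤ ((SMr.card * SMc.card : ℕ) : ENNReal) * t := mul_le_mul_right ht _
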